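/- Let X be a regular sequentially compact space that is not compact. Then either (a) X has a countable subset whose closure is not compact, or (b) there exist a subset E ⊆ X of cardinality ℵ₁ and an open set W ⊆ X such that the closure of every countable subset of E is contained in W, yet E has no complete accumulation point in W (i.e., no point of W has the property that every neighborhood of it contains ℵ₁-many points of E). -/

import Mathlib

open Set Cardinal Ordinal Filter Topology

universe u v

namespace Stmt11Aux

open Classical in
noncomputable def pick (X : Type u) [Nonempty X] (s : Set X) : X :=
  if h : s.Nonempty then h.choose else Classical.arbitrary X

lemma pick_mem {X : Type u} [Nonempty X] {s : Set X} (h : s.Nonempty) : pick X s ∈ s := by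
  rw [pick, dif_pos h]; exact h.choose_spec

noncomputable def seq {X : Type u} [Nonempty X] {A : Type v} [LinearOrder A] [WellFoundedLT A]
    (G : Set X → Set X) : A → X :=
  WellFounded.fix wellFounded_lt fun a ih =>
    pick X (⋃ b, ⋃ hb : b ≤ a, G {y | ∃ q, ∃ h : q < b, ih q (h.trans_le hb) = y})ᶜ

lemma seq_eq {X : Type u} [Nonempty X] {A : Type v} [LinearOrder A] [WellFoundedLT A]
    (G : Set X → Set X) (a : A) :
    seq G a = pick X (⋃ b, ⋃ _ : b ≤ a, G {y | ∃ q, ∃ _ : q < b, seq G q = y})ᶜ := by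
  rw [seq, WellFounded.fix_eq]

/-- Sequentially compact spaces are countably compact: no countable subfamily of a cover
with no finite subcover can cover. -/
lemma aux_cc {X : Type u} [TopologicalSpace X] [SeqCompactSpace X] {ι : Type v}
    {U : ι → Set X} (hUo : ∀ i, IsOpen (U i))
    (hnofin : ∀ s : Finset ι, ¬ (Set.univ : Set X) ⊆ ⋃ i ∈ s, U i)
    {T : Set ι} (hT : T.Countable) : ∃ z, z ∉ ⋃ i ∈ T, U i := by
  classical
  by_contra h
  push_neg at h
  obtain ⟨z0, -, -⟩ := Set.not_subset.mp (hnofin ∅)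
  rcases T.eq_empty_or_nonempty with rfl | hTne
  · simpa using h z0
  obtain ⟨f, hf⟩ := hT.exists_eq_range hTne
  have key : ∀ n : ℕ, ∃ z, z ∉ ⋃ k ∈ Finset.range (n + 1), U (f k) := by
    intro n
    by_contra hn
    push_neg at hn
    refine hnofin ((Finset.range (n + 1)).image f) fun z _ => ?_
    obtain ⟨k, hk, hz⟩ := Set.mem_iUnion₂.mp (hn z)
    exact Set.mem_iUnion₂.mpr ⟨f k, Finset.mem_image_of_mem f hk, hz⟩
  choose y hy using key
  obtain ⟨a, φ, hφ, hconv⟩ := SeqCompactSpace.tendsto_subseq y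
  obtain ⟨i, hiT, hai⟩ := Set.mem_iUnion₂.mp (h a)
  rw [hf] at hiT
  obtain ⟨m, rfl⟩ := hiT
  have hev : ∀ᶠ n in atTop, (y ∘ φ) n ∈ U (f m) :=
    hconv.eventually_mem ((hUo _).mem_nhds hai)
  obtain ⟨N, hN⟩ := eventually_atTop.mp hev
  set n := max N m with hn
  refine hy (φ n) (Set.mem_iUnion₂.mpr ⟨m, ?_, hN n (le_max_left _ _)⟩)
  have : m ≤ φ n := le_trans (le_max_right N m) hφ.le_apply
  exact Finset.mem_range.mpr (by omega)

theorem main {X : Type u} [TopologicalSpace X] [SeqCompactSpace X]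
    (hnc : ¬ CompactSpace X)
    (hωb : ∀ c : Set X, c.Countable → IsCompact (closure c)) :
    ∃ (E W : Set X), Cardinal.mk E = Cardinal.aleph 1 ∧ IsOpen W ∧
      (∀ c ⊆ E, c.Countable → closure c ⊆ W) ∧
      ∀ x ∈ W, ¬ (∀ V ∈ nhds x, Cardinal.aleph 1 ≤ Cardinal.mk ↥(V ∩ E)) := by
  classical
  have h1 : ¬ IsCompact (Set.univ : Set X) := fun h => hnc ⟨h⟩
  have h2 : ¬ ∀ (ιT : Type u) (UU : ιT → Set X), (∀ i, IsOpen (UU i)) →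
      (Set.univ : Set X) ⊆ ⋃ i, UU i →
      ∃ s : Finset ιT, (Set.univ : Set X) ⊆ ⋃ i ∈ s, UU i := fun h =>
    h1 (isCompact_iff_finite_subcover.mpr fun {ιT} UU a b => h ιT UU a b)
  push_neg at h2
  obtain ⟨ι, U, hUo, hUcov, hnofin⟩ := h2
  obtain ⟨z0, -, -⟩ := Set.not_subset.mp (hnofin ∅)
  haveI : Nonempty X := ⟨z0⟩
  -- finite subcover oracle for closures of countable sets
  have hsub : ∀ s : Set X, s.Countable → ∃ t : Finset ι, closure s ⊆ ⋃ i ∈ t, U i := by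
    intro s hs
    exact (hωb s hs).elim_finite_subcover U hUo (subset_trans (Set.subset_univ _) hUcov)
  set t : Set X → Finset ι := fun s =>
    if h : ∃ t : Finset ι, closure s ⊆ ⋃ i ∈ t, U i then h.choose else ∅ with ht_def
  have ht : ∀ s : Set X, s.Countable → closure s ⊆ ⋃ i ∈ t s, U i := by
    intro s hs
    simp only [ht_def, dif_pos (hsub s hs)]
    exact (hsub s hs).choose_spec
  set O : Set X → Set X := fun s => ⋃ i ∈ t s, U i with hO_def
  have hOopen : ∀ s, IsOpen (O s) := fun s => isOpen_biUnion fun i _ => hUo i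
  -- the index well-order of type ω₁
  have hIio_count : ∀ a : (Cardinal.aleph 1 : Cardinal.{u}).ord.ToType,
      {q | q < a}.Countable := by
    intro a
    rw [Cardinal.countable_iff_lt_aleph_one]
    exact Cardinal.mk_Iio_ord_toType a
  have hIic_count : ∀ a : (Cardinal.aleph 1 : Cardinal.{u}).ord.ToType,
      {q | q ≤ a}.Countable := by
    intro a
    have he : {q | q ≤ a} = {q | q < a} ∪ {a} := by
      ext q
      simp only [Set.mem_setOf_eq, Set.mem_union, Set.mem_singleton_iff]
      exact le_iff_lt_or_eq
    rw [he]
    exact (hIio_count a).union (Set.countable_singleton a)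
  set x : (Cardinal.aleph 1 : Cardinal.{u}).ord.ToType → X := seq O with hx_def
  set S : (Cardinal.aleph 1 : Cardinal.{u}).ord.ToType → Set X :=
    fun b => {y | ∃ q, ∃ _ : q < b, x q = y} with hS_def
  have hSim : ∀ b, S b = x '' {q | q < b} := by
    intro b
    ext y
    simp only [hS_def, Set.mem_setOf_eq, Set.mem_image, exists_prop]
  have hScount : ∀ b, (S b).Countable := by
    intro b
    rw [hSim]
    exact (hIio_count b).image x
  set V : (Cardinal.aleph 1 : Cardinal.{u}).ord.ToType → Set X :=
    fun a => ⋃ b, ⋃ _ : b ≤ a, O (S b) with hV_def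
  have hxa_eq : ∀ a, x a = pick X (V a)ᶜ := fun a => seq_eq O a
  have hVopen : ∀ a, IsOpen (V a) := fun a =>
    isOpen_iUnion fun b => isOpen_iUnion fun _ => hOopen _
  have hVmono : ∀ {a a'}, a ≤ a' → V a ⊆ V a' := by
    intro a a' haa' y hy
    obtain ⟨b, hb, hyO⟩ := Set.mem_iUnion₂.mp hy
    exact Set.mem_iUnion₂.mpr ⟨b, hb.trans haa', hyO⟩
  have hVne : ∀ a, (V a)ᶜ.Nonempty := by
    intro a
    have hTc : (⋃ b ∈ {q | q ≤ a}, (t (S b) : Set ι)).Countable :=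
      (hIic_count a).biUnion fun b _ => (t (S b)).countable_toSet
    obtain ⟨z, hz⟩ := aux_cc hUo hnofin hTc
    refine ⟨z, fun hzV => hz ?_⟩
    obtain ⟨b, hb, hzO⟩ := Set.mem_iUnion₂.mp hzV
    obtain ⟨i, hi, hzi⟩ := Set.mem_iUnion₂.mp hzO
    exact Set.mem_iUnion₂.mpr ⟨i, Set.mem_iUnion₂.mpr ⟨b, hb, hi⟩, hzi⟩
  have hxV : ∀ a, x a ∉ V a := by
    intro a
    rw [hxa_eq a]
    exact pick_mem (hVne a)
  have hSsubV : ∀ {b a}, b ≤ a → S b ⊆ V a := by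
    intro b a hba y hy
    exact Set.mem_iUnion₂.mpr ⟨b, hba, ht _ (hScount b) (subset_closure hy)⟩
  have hmem : ∀ {q a}, q < a → x q ∈ V a := by
    intro q a hqa
    exact hSsubV le_rfl ⟨q, hqa, rfl⟩
  have hinj : Function.Injective x := by
    intro q a hqa
    rcases lt_trichotomy q a with h | h | h
    · exact absurd (hqa ▸ hmem h) (hxV a)
    · exact h
    · exact absurd (by rw [hqa]; exact hmem h) (hxV q)
  refine ⟨Set.range x, ⋃ a, V a, ?_, isOpen_iUnion hVopen, ?_, ?_⟩
  · rw [Cardinal.mk_range_eq x hinj]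
    exact (Cardinal.mk_toType _).trans (Cardinal.card_ord _)
  · -- closures of countable subsets
    intro c hcE hcc
    have hBc : (x ⁻¹' c).Countable := by
      have hi : Function.Injective fun q : (x ⁻¹' c) => (⟨x q, q.2⟩ : c) := by
        intro q q' h
        exact Subtype.ext (hinj (congrArg Subtype.val h))
      have hle : Cardinal.mk (x ⁻¹' c) ≤ Cardinal.mk c := ⟨⟨_, hi⟩⟩
      rw [Cardinal.countable_iff_lt_aleph_one] at hcc ⊢
      exact lt_of_le_of_lt hle hcc
    have hbd : Set.Bounded (· < ·) (x ⁻¹' c) := by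
      haveI : IsWellOrder (Cardinal.aleph 1 : Cardinal.{u}).ord.ToType (· < ·) :=
        isWellOrder_lt
      suffices hlt : Cardinal.mk (x ⁻¹' c) < Ordinal.cof (Ordinal.type
          ((· < ·) : (Cardinal.aleph 1 : Cardinal.{u}).ord.ToType →
            (Cardinal.aleph 1 : Cardinal.{u}).ord.ToType → Prop)) by
        by_contra hnb
        have hcof : IsCofinal (x ⁻¹' c) := fun a => by
          obtain ⟨b, hb, hab⟩ := (not_bounded_iff _).mp hnb a
          exact ⟨b, hb, not_lt.mp hab⟩
        rw [Ordinal.type_toType, ← Ordinal.cof_toType] at hlt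
        exact absurd (Order.cof_le hcof) (not_le.mpr hlt)
      have he : Ordinal.type
          ((· < ·) : (Cardinal.aleph 1 : Cardinal.{u}).ord.ToType →
            (Cardinal.aleph 1 : Cardinal.{u}).ord.ToType → Prop) =
          (Cardinal.aleph 1 : Cardinal.{u}).ord := Ordinal.type_toType _
      rw [he, Cardinal.isRegular_aleph_one.cof_eq, ← Cardinal.countable_iff_lt_aleph_one]
      exact hBc
    obtain ⟨a, ha⟩ := hbd
    have hcS : c ⊆ S a := by
      intro y hy
      obtain ⟨q, rfl⟩ := hcE hy
      exact ⟨q, ha q hy, rfl⟩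
    refine subset_trans (closure_mono hcS) (subset_trans (ht _ (hScount a)) ?_)
    intro y hy
    exact Set.mem_iUnion.mpr ⟨a, Set.mem_iUnion₂.mpr ⟨a, le_rfl, hy⟩⟩
  · -- no complete accumulation point in W
    intro z hz hacc
    obtain ⟨a, ha⟩ := Set.mem_iUnion.mp hz
    have hVnhds : V a ∈ nhds z := (hVopen a).mem_nhds ha
    have hsubset : V a ∩ Set.range x ⊆ x '' {q | q ≤ a} := by
      rintro y ⟨hyV, q, rfl⟩
      refine ⟨q, ?_, rfl⟩
      show q ≤ a
      by_contra hq
      exact hxV q (hVmono (not_le.mp hq).le hyV)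
    have hcnt : (V a ∩ Set.range x).Countable :=
      Set.Countable.mono hsubset ((hIic_count a).image x)
    have hle := hacc (V a) hVnhds
    rw [Cardinal.countable_iff_lt_aleph_one] at hcnt
    exact absurd hle (not_le.mpr hcnt)

end Stmt11Aux

theorem stmt_11 {X : Type*} [TopologicalSpace X] [RegularSpace X]
    [SeqCompactSpace X] (hnc : ¬ CompactSpace X) :
    (∃ c : Set X, c.Countable ∧ ¬ IsCompact (closure c)) ∨
    (∃ (E W : Set X), Cardinal.mk E = Cardinal.aleph 1 ∧ IsOpen W ∧
      (∀ c ⊆ E, c.Countable → closure c ⊆ W) ∧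
      ∀ x ∈ W, ¬ (∀ V ∈ nhds x, Cardinal.aleph 1 ≤ Cardinal.mk ↥(V ∩ E))) := by
  by_cases h : ∃ c : Set X, c.Countable ∧ ¬ IsCompact (closure c)
  · exact Or.inl h
  · right
    push_neg at h
    exact Stmt11Aux.main hnc h
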